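/- Let l, T ∈ ℕ, let Q̂ = (−1/3, …, −1/3) + [−T, 2T]^l ⊆ ℝ^l, and let φ : ℤ^l → ℤ^l be a permutation such that ‖φ(x) − x‖ ≤ T for all x ∈ ℤ^l. Then there exist permutations σ₁, σ₂, …, σ_{3^l + 1} of (1/2)ℤ^l such that: (i) for each k ∈ {1, …, 3^l + 1} there exists p_k ∈ {−1, 0, 1}^l such that for every z ∈ ℤ^l the restriction of σ_k to (1/2)ℤ^l ∩ (Q̂ + T(3z + p_k)) is a permutation of (1/2)ℤ^l ∩ (Q̂ + T(3z + p_k)); (ii) φ equals the restriction to ℤ^l of the composition σ_{3^l + 1} ∘ σ_{3^l} ∘ ⋯ ∘ σ₁. -/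

import Mathlib

noncomputable section

/-- The integer lattice `ℤ^l ⊆ ℝ^l`. -/
def intLat (l : ℕ) : Set (EuclideanSpace ℝ (Fin l)) := {x | ∀ i, ∃ n : ℤ, x i = n}

/-- The half-integer lattice `(1/2)ℤ^l ⊆ ℝ^l`. -/
def halfLat (l : ℕ) : Set (EuclideanSpace ℝ (Fin l)) :=
  {x | ∀ i, ∃ n : ℤ, x i = (n : ℝ) / 2}

/-- The translate `Q̂ + T(3z + q)` of the cube
`Q̂ = (-1/3, …, -1/3) + [-T, 2T]^l`. -/
def tileSet (l T : ℕ) (z q : Fin l → ℝ) : Set (EuclideanSpace ℝ (Fin l)) :=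
  {x | ∀ i, x i + 1 / 3 - (T : ℝ) * (3 * z i + q i) ∈ Set.Icc (-(T : ℝ)) (2 * T)}

namespace Stmt17Aux

/-! ### List folding lemmas -/

theorem foldl_fixed {α : Type*} (L : List (α → α)) (a : α) (h : ∀ g ∈ L, g a = a) :
    L.foldl (fun y g => g y) a = a := by
  induction L with
  | nil => rfl
  | cons g L ih =>
    simp only [List.foldl_cons]
    rw [h g (by simp)]
    exact ih fun g' hg' => h g' (by simp [hg'])

theorem foldl_ofFn {α : Type*} : ∀ (n : ℕ) (σ : Fin n → α → α) (a b : α) (k₀ : Fin n),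
    (∀ k, k < k₀ → σ k a = a) → σ k₀ a = b → (∀ k, k₀ < k → σ k b = b) →
    (List.ofFn σ).foldl (fun y g => g y) a = b := by
  intro n
  induction n with
  | zero => intro σ a b k₀; exact k₀.elim0
  | succ n ih =>
    intro σ a b k₀ h1 h2 h3
    rw [List.ofFn_succ, List.foldl_cons]
    rcases Fin.eq_zero_or_eq_succ k₀ with h0 | ⟨j, rfl⟩
    · subst h0
      rw [h2]
      apply foldl_fixed
      intro g hg
      rw [List.mem_ofFn] at hg
      obtain ⟨i, rfl⟩ := hg
      exact h3 _ (Fin.succ_pos i)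
    · rw [h1 0 (Fin.succ_pos j)]
      exact ih _ a b j (fun k hk => h1 k.succ (by simpa using hk)) h2
        (fun k hk => h3 k.succ (by simpa using hk))

/-! ### Integer block arithmetic -/

def inBlock (T : ℕ) (s m : ℤ) : Prop := (T:ℤ) * s ≤ m ∧ m ≤ (T:ℤ) * s + 3 * T - 1

def sB (T : ℕ) (m m' : ℤ) : ℤ := ⌊((min m m' : ℤ):ℝ) / (T:ℝ)⌋

theorem block_choice {T : ℕ} (hT : 0 < T) (m m' : ℤ) (h : |m - m'| ≤ (T:ℤ)) :
    inBlock T (sB T m m') m ∧ inBlock T (sB T m m') m' := by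
  have hT' : (0:ℝ) < (T:ℝ) := by exact_mod_cast hT
  set μ : ℤ := min m m' with hμ
  set s : ℤ := sB T m m' with hs
  have h1 : (T:ℤ) * s ≤ μ := by
    have h0 : ((s:ℝ)) ≤ (μ:ℝ) / (T:ℝ) := Int.floor_le _
    have : (T:ℝ) * (s:ℝ) ≤ (μ:ℝ) := by
      rw [mul_comm]
      exact (le_div_iff₀ hT').mp h0
    exact_mod_cast this
  have h2 : μ ≤ (T:ℤ) * s + T - 1 := by
    have h0 : (μ:ℝ) / (T:ℝ) < (s:ℝ) + 1 := Int.lt_floor_add_one _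
    have h0' : (μ:ℝ) < (T:ℝ) * ((s:ℝ) + 1) := by
      rw [mul_comm]
      exact (div_lt_iff₀ hT').mp h0
    have h0'' : μ < (T:ℤ) * (s + 1) := by exact_mod_cast h0'
    have := mul_add (T:ℤ) s 1
    omega
  have habs := abs_le.mp h
  have hm : μ ≤ m ∧ m ≤ μ + T := by omega
  have hm' : μ ≤ m' ∧ m' ≤ μ + T := by omega
  have hT1 : (1:ℤ) ≤ T := by exact_mod_cast hT
  constructor <;> constructor <;> omega

theorem block_unique {T : ℕ} (hT : 0 < T) {s s' m : ℤ} (h : inBlock T s m) (h' : inBlock T s' m)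
    (hres : s % 3 = s' % 3) : s = s' := by
  have hT' : (0:ℤ) < (T:ℤ) := by exact_mod_cast hT
  have key : ∀ a b : ℤ, (T:ℤ) * a ≤ m → m ≤ (T:ℤ) * b + 3 * T - 1 → a - b < 3 := by
    intro a b ha hb
    by_contra hc
    push_neg at hc
    have h3 : (T:ℤ) * b + (T:ℤ) * 3 ≤ (T:ℤ) * a := by
      have := mul_le_mul_of_nonneg_left (show b + 3 ≤ a by omega) (le_of_lt hT')
      rw [mul_add] at this
      linarith
    omega
  have c1 := key s s' h.1 h'.2
  have c2 := key s' s h'.1 h.2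
  omega

theorem int_le_of_real_lt_add_one {a b : ℤ} (h : (a:ℝ) < (b:ℝ) + 1) : a ≤ b := by
  have : a < b + 1 := by exact_mod_cast h
  omega

theorem coord_int {T : ℕ} (hT : 0 < T) (u m : ℤ) :
    ((m:ℝ) + 1/3 - (T:ℝ) * (u:ℝ) ∈ Set.Icc (-(T:ℝ)) (2*(T:ℝ))) ↔ inBlock T (u-1) m := by
  rw [Set.mem_Icc]
  constructor
  · rintro ⟨hlo, hhi⟩
    constructor
    · have : (T:ℤ) * (u-1) ≤ m := int_le_of_real_lt_add_one (by push_cast; linarith)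
      omega
    · exact int_le_of_real_lt_add_one (by push_cast; linarith)
  · rintro ⟨hlo, hhi⟩
    have hlo' : ((T:ℤ) * (u-1) : ℝ) ≤ (m:ℝ) := by exact_mod_cast hlo
    have hhi' : (m:ℝ) ≤ ((T:ℤ)*(u-1) + 3*T - 1 : ℝ) := by exact_mod_cast hhi
    constructor
    · push_cast at hlo' ⊢; linarith
    · push_cast at hhi' ⊢; linarith

theorem coord_half {T : ℕ} (hT : 0 < T) (u m : ℤ) :
    ((m:ℝ) + 1/2 + 1/3 - (T:ℝ) * (u:ℝ) ∈ Set.Icc (-(T:ℝ)) (2*(T:ℝ))) ↔ inBlock T (u-1) m := by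
  rw [Set.mem_Icc]
  constructor
  · rintro ⟨hlo, hhi⟩
    constructor
    · have : (T:ℤ) * (u-1) ≤ m := int_le_of_real_lt_add_one (by push_cast; linarith)
      omega
    · exact int_le_of_real_lt_add_one (by push_cast; linarith)
  · rintro ⟨hlo, hhi⟩
    have hlo' : ((T:ℤ) * (u-1) : ℝ) ≤ (m:ℝ) := by exact_mod_cast hlo
    have hhi' : (m:ℝ) ≤ ((T:ℤ)*(u-1) + 3*T - 1 : ℝ) := by exact_mod_cast hhi
    constructor
    · push_cast at hlo' ⊢; linarith
    · push_cast at hhi' ⊢; linarith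

/-! ### Lattice basics -/

def hv (l : ℕ) : EuclideanSpace ℝ (Fin l) := WithLp.toLp 2 (fun _ => (1:ℝ)/2)

theorem hv_apply (l : ℕ) (i : Fin l) : hv l i = 1/2 := rfl

theorem coord_dist (l : ℕ) (x y : EuclideanSpace ℝ (Fin l)) (i : Fin l) :
    |x i - y i| ≤ dist x y := by
  rw [EuclideanSpace.dist_eq]
  have h1 : |x i - y i| = Real.sqrt (dist (x i) (y i) ^ 2) := by
    rw [Real.sqrt_sq dist_nonneg, Real.dist_eq]
  rw [h1]
  apply Real.sqrt_le_sqrt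
  exact Finset.single_le_sum (f := fun j => dist (x j) (y j) ^ 2)
    (fun j _ => by positivity) (Finset.mem_univ i)

theorem int_mem_half {l : ℕ} {x : EuclideanSpace ℝ (Fin l)} (hx : x ∈ intLat l) :
    x ∈ halfLat l := by
  intro i
  obtain ⟨n, hn⟩ := hx i
  exact ⟨2*n, by rw [hn]; push_cast; ring⟩

theorem add_hv_mem_half {l : ℕ} {x : EuclideanSpace ℝ (Fin l)} (hx : x ∈ intLat l) :
    x + hv l ∈ halfLat l := by
  intro i
  obtain ⟨n, hn⟩ := hx i
  refine ⟨2*n+1, ?_⟩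
  rw [PiLp.add_apply, hn, hv_apply]
  push_cast; ring

theorem add_hv_not_int {l : ℕ} (hl : 0 < l) {x : EuclideanSpace ℝ (Fin l)} (hx : x ∈ intLat l) :
    x + hv l ∉ intLat l := by
  intro hmem
  obtain ⟨n, hn⟩ := hx ⟨0, hl⟩
  obtain ⟨m, hm⟩ := hmem ⟨0, hl⟩
  rw [PiLp.add_apply, hn, hv_apply] at hm
  have h2 : (2*m : ℝ) = 2*n + 1 := by linarith
  have h3 : (2*m : ℤ) = 2*n + 1 := by exact_mod_cast h2
  omega

theorem sub_hv_not_int {l : ℕ} (hl : 0 < l) {x : EuclideanSpace ℝ (Fin l)} (hx : x ∈ intLat l) :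
    x - hv l ∉ intLat l := by
  intro hmem
  obtain ⟨n, hn⟩ := hx ⟨0, hl⟩
  obtain ⟨m, hm⟩ := hmem ⟨0, hl⟩
  rw [PiLp.sub_apply, hn, hv_apply] at hm
  have h2 : (2*m : ℝ) = 2*n - 1 := by linarith
  have h3 : (2*m : ℤ) = 2*n - 1 := by exact_mod_cast h2
  omega

/-! ### The generic swap permutation -/

open Classical in
def sw (l : ℕ) (A : Set (EuclideanSpace ℝ (Fin l)))
    (f g : EuclideanSpace ℝ (Fin l) → EuclideanSpace ℝ (Fin l)) :
    EuclideanSpace ℝ (Fin l) → EuclideanSpace ℝ (Fin l) := fun y =>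
  if y ∈ intLat l ∧ y ∈ A then f y + hv l
  else if y - hv l ∈ intLat l ∧ g (y - hv l) ∈ A then g (y - hv l)
  else y

section sw
variable {l : ℕ} (hl : 0 < l) {A : Set (EuclideanSpace ℝ (Fin l))}
  {f g : EuclideanSpace ℝ (Fin l) → EuclideanSpace ℝ (Fin l)}
  (Hf : ∀ x ∈ intLat l, f x ∈ intLat l)
  (Hg : ∀ x ∈ intLat l, g x ∈ intLat l)
  (Hgf : ∀ x ∈ intLat l, g (f x) = x)
  (Hfg : ∀ y ∈ intLat l, f (g y) = y)

open Classical
include hl Hf Hg Hgf Hfg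

theorem sw_invol : ∀ y, sw l A f g (sw l A f g y) = y := by
  intro y
  unfold sw
  by_cases h1 : y ∈ intLat l ∧ y ∈ A
  · rw [if_pos h1]
    have hfy : f y ∈ intLat l := Hf y h1.1
    have hni : f y + hv l ∉ intLat l := add_hv_not_int hl hfy
    rw [if_neg (fun hc => hni hc.1)]
    have hsub : f y + hv l - hv l = f y := add_sub_cancel_right _ _
    rw [if_pos (by rw [hsub, Hgf y h1.1]; exact ⟨hfy, h1.2⟩), hsub, Hgf y h1.1]
  · rw [if_neg h1]
    by_cases h2 : y - hv l ∈ intLat l ∧ g (y - hv l) ∈ A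
    · rw [if_pos h2]
      have hx : g (y - hv l) ∈ intLat l := Hg _ h2.1
      rw [if_pos ⟨hx, h2.2⟩, Hfg _ h2.1, sub_add_cancel]
    · rw [if_neg h2, if_neg h1, if_neg h2]

theorem sw_mapsTo_half : Set.MapsTo (sw l A f g) (halfLat l) (halfLat l) := by
  intro y hy
  unfold sw
  by_cases h1 : y ∈ intLat l ∧ y ∈ A
  · rw [if_pos h1]; exact add_hv_mem_half (Hf y h1.1)
  · rw [if_neg h1]
    by_cases h2 : y - hv l ∈ intLat l ∧ g (y - hv l) ∈ A
    · rw [if_pos h2]; exact int_mem_half (Hg _ h2.1)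
    · rwa [if_neg h2]

theorem sw_bijOn_half : Set.BijOn (sw l A f g) (halfLat l) (halfLat l) := by
  have hinv : Set.InvOn (sw l A f g) (sw l A f g) (halfLat l) (halfLat l) :=
    ⟨fun y _ => sw_invol hl Hf Hg Hgf Hfg y, fun y _ => sw_invol hl Hf Hg Hgf Hfg y⟩
  exact hinv.bijOn (sw_mapsTo_half hl Hf Hg Hgf Hfg) (sw_mapsTo_half hl Hf Hg Hgf Hfg)

theorem sw_bijOn_inter (S : Set (EuclideanSpace ℝ (Fin l)))
    (H1 : ∀ y, y ∈ intLat l → y ∈ A → y ∈ S → f y + hv l ∈ S)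
    (H2 : ∀ y ∈ S, y - hv l ∈ intLat l → g (y - hv l) ∈ A → g (y - hv l) ∈ S) :
    Set.BijOn (sw l A f g) (halfLat l ∩ S) (halfLat l ∩ S) := by
  have hmaps : Set.MapsTo (sw l A f g) (halfLat l ∩ S) (halfLat l ∩ S) := by
    rintro y ⟨hyh, hyS⟩
    refine ⟨sw_mapsTo_half hl Hf Hg Hgf Hfg hyh, ?_⟩
    unfold sw
    by_cases h1 : y ∈ intLat l ∧ y ∈ A
    · rw [if_pos h1]; exact H1 y h1.1 h1.2 hyS
    · rw [if_neg h1]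
      by_cases h2 : y - hv l ∈ intLat l ∧ g (y - hv l) ∈ A
      · rw [if_pos h2]; exact H2 y hyS h2.1 h2.2
      · rwa [if_neg h2]
  have hinv : Set.InvOn (sw l A f g) (sw l A f g) (halfLat l ∩ S) (halfLat l ∩ S) :=
    ⟨fun y _ => sw_invol hl Hf Hg Hgf Hfg y, fun y _ => sw_invol hl Hf Hg Hgf Hfg y⟩
  exact hinv.bijOn hmaps hmaps

end sw

/-! ### Patterns -/

def qv (c : Fin 3) : ℤ := (c : ℤ) - 1

theorem qv_cases (c : Fin 3) : qv c = -1 ∨ qv c = 0 ∨ qv c = 1 := by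
  fin_cases c <;> simp [qv]

def patc (T : ℕ) {l : ℕ} (φ : EuclideanSpace ℝ (Fin l) → EuclideanSpace ℝ (Fin l))
    (x : EuclideanSpace ℝ (Fin l)) (i : Fin l) : Fin 3 :=
  ⟨((sB T ⌊x i⌋ ⌊φ x i⌋ + 2) % 3).toNat, by omega⟩

theorem patc_residue (T : ℕ) {l : ℕ} (φ : EuclideanSpace ℝ (Fin l) → EuclideanSpace ℝ (Fin l))
    (x : EuclideanSpace ℝ (Fin l)) (i : Fin l) :
    (patc T φ x i : ℤ) = (sB T ⌊x i⌋ ⌊φ x i⌋ + 2) % 3 := by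
  simp only [patc, Fin.val_mk]
  omega

def pidx (T : ℕ) {l : ℕ} (φ : EuclideanSpace ℝ (Fin l) → EuclideanSpace ℝ (Fin l))
    (x : EuclideanSpace ℝ (Fin l)) : Fin (3 ^ l) :=
  finFunctionFinEquiv (patc T φ x)

end Stmt17Aux

open Stmt17Aux in
theorem stmt17 (l T : ℕ) (φ : EuclideanSpace ℝ (Fin l) → EuclideanSpace ℝ (Fin l))
    (hφ : Set.BijOn φ (intLat l) (intLat l))
    (hdist : ∀ x ∈ intLat l, dist (φ x) x ≤ T) :
    ∃ σ : Fin (3 ^ l + 1) →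
        (EuclideanSpace ℝ (Fin l) → EuclideanSpace ℝ (Fin l)),
      (∀ k, Set.BijOn (σ k) (halfLat l) (halfLat l)) ∧
      (∀ k, ∃ q : Fin l → ℝ, (∀ i, q i = -1 ∨ q i = 0 ∨ q i = 1) ∧
        ∀ z : Fin l → ℝ, (∀ i, ∃ n : ℤ, z i = n) →
          Set.BijOn (σ k) (halfLat l ∩ tileSet l T z q)
            (halfLat l ∩ tileSet l T z q)) ∧
      (∀ x ∈ intLat l, φ x = (List.ofFn σ).foldl (fun y g => g y) x) := by
  classical
  -- trivial cases: l = 0 or T = 0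
  by_cases htriv : l = 0 ∨ T = 0
  · refine ⟨fun _ => id, fun k => Set.bijOn_id _, fun k => ⟨fun _ => 0, fun i => Or.inr (Or.inl rfl),
      fun z hz => Set.bijOn_id _⟩, ?_⟩
    intro x hx
    rw [foldl_fixed _ _ (fun g hg => by
      rw [List.mem_ofFn] at hg
      obtain ⟨i, rfl⟩ := hg
      rfl)]
    rcases htriv with hl0 | hT0
    · subst hl0
      exact PiLp.ext (fun i => i.elim0)
    · have : dist (φ x) x ≤ 0 := by simpa [hT0] using hdist x hx
      have : dist (φ x) x = 0 := le_antisymm this dist_nonneg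
      exact dist_eq_zero.mp this
  push_neg at htriv
  have hl : 0 < l := Nat.pos_of_ne_zero htriv.1
  have hT : 0 < T := Nat.pos_of_ne_zero htriv.2
  set ψ := Function.invFunOn φ (intLat l) with hψdef
  have hinv : Set.InvOn ψ φ (intLat l) (intLat l) := hφ.invOn_invFunOn
  have Hf : ∀ x ∈ intLat l, φ x ∈ intLat l := fun x hx => hφ.mapsTo hx
  have Hg : ∀ y ∈ intLat l, ψ y ∈ intLat l := by
    intro y hy
    obtain ⟨x, hx, hxy⟩ := hφ.surjOn hy
    exact Function.invFunOn_mem ⟨x, hx, hxy⟩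
  have Hgf : ∀ x ∈ intLat l, ψ (φ x) = x := fun x hx => hinv.1 hx
  have Hfg : ∀ y ∈ intLat l, φ (ψ y) = y := fun y hy => hinv.2 hy
  -- the class distance bound
  have hblocks : ∀ x ∈ intLat l, ∀ i : Fin l,
      inBlock T (sB T ⌊x i⌋ ⌊φ x i⌋) ⌊x i⌋ ∧ inBlock T (sB T ⌊x i⌋ ⌊φ x i⌋) ⌊φ x i⌋ := by
    intro x hx i
    obtain ⟨m, hm⟩ := hx i
    obtain ⟨m', hm'⟩ := Hf x hx i
    have hd : |φ x i - x i| ≤ (T:ℝ) := le_trans (coord_dist l (φ x) x i) (hdist x hx)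
    rw [hm, hm'] at hd
    have hd' : |⌊x i⌋ - ⌊φ x i⌋| ≤ (T:ℤ) := by
      rw [hm, hm', Int.floor_intCast, Int.floor_intCast]
      rw [abs_sub_comm] at hd
      exact_mod_cast (by push_cast at hd ⊢; exact hd : |(m:ℝ) - (m':ℝ)| ≤ (T:ℝ))
    exact block_choice hT _ _ hd'
  -- the permutations
  set A : Fin (3 ^ l) → Set (EuclideanSpace ℝ (Fin l)) :=
    fun k => {x | pidx T φ x = k} with hAdef
  set σ : Fin (3 ^ l + 1) → (EuclideanSpace ℝ (Fin l) → EuclideanSpace ℝ (Fin l)) :=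
    fun k => if hk : (k:ℕ) < 3 ^ l then sw l (A ⟨k, hk⟩) φ ψ else sw l Set.univ id id with hσdef
  have hσ_lt : ∀ (k : Fin (3 ^ l + 1)) (hk : (k:ℕ) < 3 ^ l), σ k = sw l (A ⟨k, hk⟩) φ ψ :=
    fun k hk => dif_pos hk
  have hσ_last : ∀ (k : Fin (3 ^ l + 1)), ¬ ((k:ℕ) < 3 ^ l) → σ k = sw l Set.univ id id :=
    fun k hk => dif_neg hk
  have Hid : ∀ x ∈ intLat l, (id x : EuclideanSpace ℝ (Fin l)) ∈ intLat l := fun x hx => hx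
  have Hidid : ∀ x ∈ intLat l, (id (id x) : EuclideanSpace ℝ (Fin l)) = x := fun x _ => rfl
  -- the key tile lemmas
  have key1 : ∀ (k : Fin (3 ^ l)) (z : Fin l → ℝ), (∀ i, ∃ n : ℤ, z i = n) →
      ∀ y, y ∈ intLat l → y ∈ A k →
        y ∈ tileSet l T z (fun i => (qv (finFunctionFinEquiv.symm k i) : ℝ)) →
        φ y + hv l ∈ tileSet l T z (fun i => (qv (finFunctionFinEquiv.symm k i) : ℝ)) := by
    intro k z hz y hy hA hyS
    intro i
    obtain ⟨zi, hzi⟩ := hz i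
    obtain ⟨m, hm⟩ := hy i
    obtain ⟨m', hm'⟩ := Hf y hy i
    have hfl : ⌊y i⌋ = m := by rw [hm]; exact Int.floor_intCast m
    have hfl' : ⌊φ y i⌋ = m' := by rw [hm']; exact Int.floor_intCast m'
    have hbl := hblocks y hy i
    rw [hfl, hfl'] at hbl
    set s : ℤ := sB T m m' with hs
    set c : Fin 3 := finFunctionFinEquiv.symm k i with hc
    set u : ℤ := 3 * zi + qv c with hu
    have hqc : (T:ℝ) * (3 * z i + (qv c : ℝ)) = (T:ℝ) * (u:ℝ) := by
      rw [hzi, hu]; push_cast; ring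
    have hyi := hyS i
    simp only at hyi
    rw [hm, hqc] at hyi
    have hin : inBlock T (u-1) m := (coord_int hT u m).mp hyi
    have hpc : patc T φ y i = c := by
      have : patc T φ y = finFunctionFinEquiv.symm k := by
        rw [← hA]
        exact (Equiv.symm_apply_apply _ _).symm
      rw [this]
    have hcz : (c : ℤ) = (s + 2) % 3 := by
      rw [← hpc, patc_residue, hfl, hfl']
    have hres : (u - 1) % 3 = s % 3 := by
      have hqvc : qv c = (s + 2) % 3 - 1 := by rw [qv, hcz]
      omega
    have hus : u - 1 = s := block_unique hT hin hbl.1 hres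
    show (φ y + hv l) i + 1/3 - (T:ℝ) * (3 * z i + (qv c : ℝ)) ∈ Set.Icc (-(T:ℝ)) (2*(T:ℝ))
    rw [PiLp.add_apply, hm', hv_apply, hqc]
    exact (coord_half hT u m').mpr (hus ▸ hbl.2)
  have key2 : ∀ (k : Fin (3 ^ l)) (z : Fin l → ℝ), (∀ i, ∃ n : ℤ, z i = n) →
      ∀ y ∈ tileSet l T z (fun i => (qv (finFunctionFinEquiv.symm k i) : ℝ)),
        y - hv l ∈ intLat l → ψ (y - hv l) ∈ A k →
        ψ (y - hv l) ∈ tileSet l T z (fun i => (qv (finFunctionFinEquiv.symm k i) : ℝ)) := by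
    intro k z hz y hyS hy2 hA
    set x := ψ (y - hv l) with hx
    have hxint : x ∈ intLat l := Hg _ hy2
    have hφx : φ x = y - hv l := Hfg _ hy2
    intro i
    obtain ⟨zi, hzi⟩ := hz i
    obtain ⟨m, hm⟩ := hxint i
    obtain ⟨m', hm'⟩ := hy2 i
    have hyi' : y i = (m' : ℝ) + 1/2 := by
      have : (y - hv l) i = y i - 1/2 := by rw [PiLp.sub_apply, hv_apply]
      rw [this] at hm'
      linarith
    have hfl : ⌊x i⌋ = m := by rw [hm]; exact Int.floor_intCast m
    have hfl' : ⌊φ x i⌋ = m' := by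
      rw [hφx, hm']; exact Int.floor_intCast m'
    have hbl := hblocks x hxint i
    rw [hfl, hfl'] at hbl
    set s : ℤ := sB T m m' with hs
    set c : Fin 3 := finFunctionFinEquiv.symm k i with hc
    set u : ℤ := 3 * zi + qv c with hu
    have hqc : (T:ℝ) * (3 * z i + (qv c : ℝ)) = (T:ℝ) * (u:ℝ) := by
      rw [hzi, hu]; push_cast; ring
    have hyi := hyS i
    simp only at hyi
    rw [hyi', hqc] at hyi
    have hin : inBlock T (u-1) m' := (coord_half hT u m').mp hyi
    have hpc : patc T φ x i = c := by
      have : patc T φ x = finFunctionFinEquiv.symm k := by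
        rw [← hA]
        exact (Equiv.symm_apply_apply _ _).symm
      rw [this]
    have hcz : (c : ℤ) = (s + 2) % 3 := by
      rw [← hpc, patc_residue, hfl, hfl']
    have hres : (u - 1) % 3 = s % 3 := by
      have hqvc : qv c = (s + 2) % 3 - 1 := by rw [qv, hcz]
      omega
    have hus : u - 1 = s := block_unique hT hin hbl.2 hres
    show x i + 1/3 - (T:ℝ) * (3 * z i + (qv c : ℝ)) ∈ Set.Icc (-(T:ℝ)) (2*(T:ℝ))
    rw [hm, hqc]
    exact (coord_int hT u m).mpr (hus ▸ hbl.1)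
  have key3 : ∀ (z : Fin l → ℝ), (∀ i, ∃ n : ℤ, z i = n) →
      ∀ y, y ∈ intLat l → y ∈ tileSet l T z (fun _ => (0:ℝ)) →
        y + hv l ∈ tileSet l T z (fun _ => (0:ℝ)) := by
    intro z hz y hy hyS i
    obtain ⟨zi, hzi⟩ := hz i
    obtain ⟨m, hm⟩ := hy i
    set u : ℤ := 3 * zi with hu
    have hqc : (T:ℝ) * (3 * z i + 0) = (T:ℝ) * (u:ℝ) := by rw [hzi, hu]; push_cast; ring
    have hyi := hyS i
    simp only at hyi
    rw [hm, hqc] at hyi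
    have hin : inBlock T (u-1) m := (coord_int hT u m).mp hyi
    show (y + hv l) i + 1/3 - (T:ℝ) * (3 * z i + 0) ∈ Set.Icc (-(T:ℝ)) (2*(T:ℝ))
    rw [PiLp.add_apply, hm, hv_apply, hqc]
    exact (coord_half hT u m).mpr hin
  have key4 : ∀ (z : Fin l → ℝ), (∀ i, ∃ n : ℤ, z i = n) →
      ∀ y ∈ tileSet l T z (fun _ => (0:ℝ)), y - hv l ∈ intLat l →
        y - hv l ∈ tileSet l T z (fun _ => (0:ℝ)) := by
    intro z hz y hyS hy2 i
    obtain ⟨zi, hzi⟩ := hz i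
    obtain ⟨m, hm⟩ := hy2 i
    have hyi' : y i = (m : ℝ) + 1/2 := by
      have : (y - hv l) i = y i - 1/2 := by rw [PiLp.sub_apply, hv_apply]
      rw [this] at hm
      linarith
    set u : ℤ := 3 * zi with hu
    have hqc : (T:ℝ) * (3 * z i + 0) = (T:ℝ) * (u:ℝ) := by rw [hzi, hu]; push_cast; ring
    have hyi := hyS i
    simp only at hyi
    rw [hyi', hqc] at hyi
    have hin : inBlock T (u-1) m := (coord_half hT u m).mp hyi
    show (y - hv l) i + 1/3 - (T:ℝ) * (3 * z i + 0) ∈ Set.Icc (-(T:ℝ)) (2*(T:ℝ))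
    rw [hm, hqc]
    exact (coord_int hT u m).mpr hin
  refine ⟨σ, ?_, ?_, ?_⟩
  · -- (i) bijections of the half lattice
    intro k
    by_cases hk : (k:ℕ) < 3 ^ l
    · rw [hσ_lt k hk]
      exact sw_bijOn_half hl Hf Hg Hgf Hfg
    · rw [hσ_last k hk]
      exact sw_bijOn_half hl Hid Hid Hidid Hidid
  · -- (ii) tile-preserving
    intro k
    by_cases hk : (k:ℕ) < 3 ^ l
    · refine ⟨fun i => (qv (finFunctionFinEquiv.symm ⟨k, hk⟩ i) : ℝ), ?_, ?_⟩
      · intro i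
        rcases qv_cases (finFunctionFinEquiv.symm ⟨k, hk⟩ i) with h | h | h <;>
          simp [h]
      · intro z hz
        rw [hσ_lt k hk]
        exact sw_bijOn_inter hl Hf Hg Hgf Hfg _ (key1 ⟨k, hk⟩ z hz) (key2 ⟨k, hk⟩ z hz)
    · refine ⟨fun _ => 0, fun i => Or.inr (Or.inl rfl), ?_⟩
      intro z hz
      rw [hσ_last k hk]
      exact sw_bijOn_inter hl Hid Hid Hidid Hidid _
        (fun y hy _ hyS => key3 z hz y hy hyS)
        (fun y hyS hy2 _ => key4 z hz y hyS hy2)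
  · -- (iii) composition
    intro x hx
    have hφx : φ x ∈ intLat l := Hf x hx
    rw [List.ofFn_succ' σ, List.concat_eq_append, List.foldl_append]
    have hfirst : (List.ofFn fun i : Fin (3 ^ l) => σ i.castSucc).foldl
        (fun y g => g y) x = φ x + hv l := by
      have hcs : ∀ i : Fin (3 ^ l), σ i.castSucc = sw l (A i) φ ψ := by
        intro i
        rw [hσ_lt i.castSucc i.is_lt]
        rfl
      refine foldl_ofFn (3 ^ l) _ x (φ x + hv l) (pidx T φ x) ?_ ?_ ?_
      · intro k hk
        rw [hcs k]
        unfold sw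
        rw [if_neg, if_neg]
        · intro hc
          exact sub_hv_not_int hl hx hc.1
        · intro hc
          exact (ne_of_lt hk) hc.2.symm
      · rw [hcs (pidx T φ x)]
        unfold sw
        rw [if_pos ⟨hx, rfl⟩]
      · intro k hk
        rw [hcs k]
        unfold sw
        rw [if_neg, if_neg]
        · rintro ⟨h1, h2⟩
          have : ψ (φ x + hv l - hv l) = x := by
            rw [add_sub_cancel_right]
            exact Hgf x hx
          rw [this] at h2
          exact (ne_of_lt hk) h2
        · intro hc
          exact add_hv_not_int hl hφx hc.1
    rw [hfirst, List.foldl_cons, List.foldl_nil, hσ_last (Fin.last (3 ^ l)) (by simp)]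
    show φ x = sw l Set.univ id id (φ x + hv l)
    unfold sw
    rw [if_neg (fun hc => add_hv_not_int hl hφx hc.1),
      if_pos ⟨by rwa [add_sub_cancel_right], trivial⟩]
    show φ x = φ x + hv l - hv l
    rw [add_sub_cancel_right]

end
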